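/- Let F : ℕ → ℂ satisfy F(n) ≪_ε n^ε and fix an integer V > 1. Then the Ramanujan coefficients R(ℓ) = ∑_{d V-smooth, ℓ|d} F'(d)/d satisfy the dual Delange condition ∑_{ℓ=1}^∞ 2^{ω(ℓ)} |R(ℓ)| < ∞. -/
import Mathlib

open scoped BigOperators
open ArithmeticFunction

/-- `n` is `Q`-smooth: every prime factor of `n` is `≤ Q`. -/
def QSmooth (Q n : ℕ) : Prop := ∀ p ∈ n.primeFactors, p ≤ Q
instance (Q n : ℕ) : Decidable (QSmooth Q n) := by unfold QSmooth; infer_instance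
/-- `n` is `Q`-sifted: coprime to every prime `≤ Q`. -/
def QSifted (Q n : ℕ) : Prop := ∀ p ∈ n.primeFactors, Q < p
instance (Q n : ℕ) : Decidable (QSifted Q n) := by unfold QSifted; infer_instance
/-- Eratosthenes transform `F' = F ∗ μ`. -/
noncomputable def era (F : ℕ → ℂ) (d : ℕ) : ℂ :=
  ∑ t ∈ d.divisors, F t * (moebius (d / t) : ℤ)
/-- Ramanujan sum `c_q(n) = ∑_{d ∣ (q,n)} d μ(q/d)`. -/
def ramanujanSum (q n : ℕ) : ℤ :=
  ∑ d ∈ (Nat.gcd q n).divisors, (d : ℤ) * moebius (q / d)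

lemma smooth_summable (N : ℕ) {sg : ℝ} (hsg : 0 < sg) :
    Summable (fun m : Nat.smoothNumbers N => ((m : ℕ) : ℝ) ^ (-sg)) := by
  have key := EulerProduct.summable_and_hasSum_smoothNumbers_prod_primesBelow_tsum
      (f := fun n : ℕ => (n : ℝ) ^ (-sg)) (by norm_num)
      (fun {m n} _ => by
        push_cast
        exact Real.mul_rpow (Nat.cast_nonneg m) (Nat.cast_nonneg n))
      (fun {p} hp => ?_) N
  · exact key.1.congr fun m =>
      Real.norm_of_nonneg (Real.rpow_nonneg (Nat.cast_nonneg _) _)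
  · have hp1 : (1:ℝ) < p := by exact_mod_cast hp.one_lt
    have h : ∀ n : ℕ, ‖((p ^ n : ℕ) : ℝ) ^ (-sg)‖ = ((p:ℝ) ^ (-sg)) ^ n := by
      intro n
      rw [Nat.cast_pow, ← Real.rpow_natCast (p:ℝ) n, ← Real.rpow_mul (by positivity),
        mul_comm, Real.rpow_mul (by positivity), Real.rpow_natCast,
        Real.norm_of_nonneg (by positivity)]
    simp only [h]
    exact summable_geometric_of_lt_one (by positivity)
      (Real.rpow_lt_one_of_one_lt_of_neg hp1 (neg_neg_iff_pos.mpr hsg))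

lemma smooth_indicator_summable (N : ℕ) {sg : ℝ} (hsg : 0 < sg) :
    Summable (Set.indicator (Nat.smoothNumbers N) (fun n : ℕ => (n : ℝ) ^ (-sg))) := by
  rw [← summable_subtype_iff_indicator]
  exact smooth_summable N hsg

set_option maxHeartbeats 1000000 in
/-- Dual Delange condition `∑_ℓ 2^{ω(ℓ)} |R(ℓ)| < ∞` for the Wintner coefficients
`R(ℓ) = ∑_{d V-smooth, ℓ ∣ d} F'(d)/d`. -/
theorem dual_delange (F : ℕ → ℂ)
    (hF : ∀ ε : ℝ, 0 < ε → ∃ C : ℝ, ∀ n : ℕ, 0 < n → ‖F n‖ ≤ C * (n : ℝ) ^ ε)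
    (V : ℕ) (hV : 1 < V) :
    Summable (fun ℓ : ℕ => (2 : ℝ) ^ ℓ.primeFactors.card *
      ‖∑' d : {d : ℕ // 0 < d ∧ QSmooth V d ∧ ℓ ∣ d}, era F d / (d : ℂ)‖) := by
  obtain ⟨C, hC⟩ := hF (1/8) (by norm_num)
  set C₀ : ℝ := max C 1 with hC₀def
  have hC₀pos : (0:ℝ) < C₀ := lt_of_lt_of_le one_pos (le_max_right _ _)
  set S : Set ℕ := Nat.smoothNumbers (V+1) with hSdef
  have hmem : ∀ d : ℕ, 0 < d → QSmooth V d → d ∈ S := by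
    intro d hd0 hdq
    rw [hSdef, Nat.mem_smoothNumbers']
    intro p hp hpd
    have : p ∈ d.primeFactors := Nat.mem_primeFactors.mpr ⟨hp, hpd, hd0.ne'⟩
    exact Nat.lt_succ_of_le (hdq p this)
  have hmem' : ∀ d : ℕ, d ∈ S → 0 < d ∧ QSmooth V d := by
    intro d hd
    refine ⟨Nat.pos_of_ne_zero (Nat.ne_zero_of_mem_smoothNumbers hd), ?_⟩
    intro p hp
    obtain ⟨hpp, hpd, -⟩ := Nat.mem_primeFactors.mp hp
    exact Nat.lt_succ_iff.mp (Nat.mem_smoothNumbers'.mp hd p hpp hpd)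
  have hind_nonneg : ∀ (sg : ℝ) (n : ℕ),
      0 ≤ Set.indicator S (fun n : ℕ => (n:ℝ) ^ (-sg)) n := fun sg n =>
    Set.indicator_nonneg (fun m _ => Real.rpow_nonneg (Nat.cast_nonneg m) _) n
  have hsum8 := smooth_indicator_summable (V+1) (sg := 1/8) (by norm_num)
  have hsum2 := smooth_indicator_summable (V+1) (sg := 1/2) (by norm_num)
  have hsum4 := smooth_indicator_summable (V+1) (sg := 1/4) (by norm_num)
  have hsum34 := smooth_indicator_summable (V+1) (sg := 3/4) (by norm_num)
  set P : ℝ := ∑' n : ℕ, Set.indicator S (fun n : ℕ => (n:ℝ) ^ (-(1/8):ℝ)) n with hPdef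
  set Q : ℝ := ∑' n : ℕ, Set.indicator S (fun n : ℕ => (n:ℝ) ^ (-(1/2):ℝ)) n with hQdef
  have hPnonneg : 0 ≤ P := tsum_nonneg (hind_nonneg (1/8))
  have hQnonneg : 0 ≤ Q := tsum_nonneg (hind_nonneg (1/2))
  -- pointwise bound on the Eratosthenes transform over smooth numbers
  have hera : ∀ d : ℕ, d ∈ S → ‖era F d / (d:ℂ)‖ ≤ C₀ * P * (d:ℝ) ^ (-(3/4):ℝ) := by
    intro d hd
    have hd0 : 0 < d := (hmem' d hd).1
    have hd0' : (0:ℝ) < d := by exact_mod_cast hd0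
    have h1 : ‖era F d‖ ≤ C₀ * (d:ℝ) ^ ((1/4):ℝ) *
        ∑ t ∈ d.divisors, (t:ℝ) ^ (-(1/8):ℝ) := by
      rw [era, Finset.mul_sum]
      refine le_trans (norm_sum_le _ _) (Finset.sum_le_sum ?_)
      intro t ht
      obtain ⟨htd, hdne⟩ := Nat.mem_divisors.mp ht
      have ht0 : 0 < t := Nat.pos_of_mem_divisors ht
      have ht0' : (0:ℝ) < t := by exact_mod_cast ht0
      have htle : (t:ℝ) ≤ (d:ℝ) := by exact_mod_cast Nat.le_of_dvd hd0 htd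
      have hmu : ‖((moebius (d/t) : ℤ) : ℂ)‖ ≤ 1 := by
        have h1 : |moebius (d/t)| ≤ 1 := abs_moebius_le_one
        calc ‖((moebius (d/t) : ℤ) : ℂ)‖ = |((moebius (d/t) : ℤ) : ℝ)| := by
              rw [show ((moebius (d/t) : ℤ) : ℂ) = (((moebius (d/t) : ℤ) : ℝ) : ℂ) by
                push_cast; ring, Complex.norm_real, Real.norm_eq_abs]
          _ ≤ 1 := by exact_mod_cast h1
      have hFt : ‖F t‖ ≤ C₀ * (t:ℝ) ^ ((1/8):ℝ) :=
        le_trans (hC t ht0) (mul_le_mul_of_nonneg_right (le_max_left _ _)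
          (Real.rpow_nonneg (Nat.cast_nonneg t) _))
      calc ‖F t * ((moebius (d/t) : ℤ) : ℂ)‖ = ‖F t‖ * ‖((moebius (d/t) : ℤ) : ℂ)‖ :=
            norm_mul _ _
        _ ≤ (C₀ * (t:ℝ) ^ ((1/8):ℝ)) * 1 :=
            mul_le_mul hFt hmu (norm_nonneg _) (by positivity)
        _ = C₀ * ((t:ℝ) ^ ((1/4):ℝ) * (t:ℝ) ^ (-(1/8):ℝ)) := by
            rw [mul_one, ← Real.rpow_add ht0']; norm_num
        _ ≤ C₀ * ((d:ℝ) ^ ((1/4):ℝ) * (t:ℝ) ^ (-(1/8):ℝ)) := by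
            refine mul_le_mul_of_nonneg_left (mul_le_mul_of_nonneg_right ?_ ?_) hC₀pos.le
            · exact Real.rpow_le_rpow ht0'.le htle (by norm_num)
            · exact Real.rpow_nonneg ht0'.le _
        _ = C₀ * (d:ℝ) ^ ((1/4):ℝ) * (t:ℝ) ^ (-(1/8):ℝ) := by ring
    have h2 : ∑ t ∈ d.divisors, (t:ℝ) ^ (-(1/8):ℝ) ≤ P := by
      have heq : ∀ t ∈ d.divisors,
          (t:ℝ) ^ (-(1/8):ℝ) = Set.indicator S (fun n : ℕ => (n:ℝ) ^ (-(1/8):ℝ)) t := by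
        intro t ht
        rw [Set.indicator_of_mem (Nat.mem_smoothNumbers_of_dvd hd (Nat.mem_divisors.mp ht).1)]
      rw [Finset.sum_congr rfl heq]
      exact Summable.sum_le_tsum _ (fun n _ => hind_nonneg (1/8) n) hsum8
    have hnorm : ‖era F d / (d:ℂ)‖ = ‖era F d‖ / (d:ℝ) := by
      rw [norm_div, Complex.norm_natCast]
    rw [hnorm, div_le_iff₀ hd0']
    calc ‖era F d‖ ≤ C₀ * (d:ℝ) ^ ((1/4):ℝ) * ∑ t ∈ d.divisors, (t:ℝ) ^ (-(1/8):ℝ) := h1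
      _ ≤ C₀ * (d:ℝ) ^ ((1/4):ℝ) * P :=
          mul_le_mul_of_nonneg_left h2 (by positivity)
      _ = C₀ * P * (d:ℝ) ^ (-(3/4):ℝ) * (d:ℝ) := by
          rw [show ((1:ℝ)/4) = -(3/4) + 1 by norm_num, Real.rpow_add hd0', Real.rpow_one]
          ring
  -- the comparison function
  refine Summable.of_nonneg_of_le (fun ℓ => by positivity)
    (fun ℓ => ?_) ((hsum4.mul_left ((2:ℝ) ^ (V+1) * (C₀ * P * Q))))
  by_cases hℓ : 0 < ℓ ∧ QSmooth V ℓ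
  · -- main case: ℓ is smooth and positive
    have hℓS : ℓ ∈ S := hmem ℓ hℓ.1 hℓ.2
    have hℓ0' : (0:ℝ) < ℓ := by exact_mod_cast hℓ.1
    set Tset : Set ℕ := {d : ℕ | 0 < d ∧ QSmooth V d ∧ ℓ ∣ d} with hTdef
    have hTS : Tset ⊆ S := fun d hd => hmem d hd.1 hd.2.1
    -- summability over the subtype of the -3/4 and -1/2 powers
    have hsubsum : ∀ (sg : ℝ), 0 < sg →
        Summable (Set.indicator S (fun n : ℕ => (n:ℝ) ^ (-sg))) →
        Summable (fun d : Tset => ((d:ℕ):ℝ) ^ (-sg)) := by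
      intro sg hsg hsum
      refine summable_subtype_iff_indicator.mpr (Summable.of_nonneg_of_le
        (fun n => Set.indicator_nonneg (fun m _ => Real.rpow_nonneg (Nat.cast_nonneg m) _) n)
        (fun n => Set.indicator_le_indicator_of_subset hTS
          (fun m => Real.rpow_nonneg (Nat.cast_nonneg m) _) n) hsum)
    have hsub34 : Summable (fun d : Tset => ((d:ℕ):ℝ) ^ (-(3/4):ℝ)) :=
      hsubsum (3/4) (by norm_num) hsum34
    have hsub2 : Summable (fun d : Tset => ((d:ℕ):ℝ) ^ (-(1/2):ℝ)) :=
      hsubsum (1/2) (by norm_num) hsum2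
    have hbound : ∀ d : Tset, ‖era F (d:ℕ) / ((d:ℕ):ℂ)‖ ≤
        C₀ * P * ((d:ℕ):ℝ) ^ (-(3/4):ℝ) := fun d => hera d (hTS d.2)
    have hnsum : Summable (fun d : Tset => ‖era F (d:ℕ) / ((d:ℕ):ℂ)‖) :=
      Summable.of_nonneg_of_le (fun d => norm_nonneg _) hbound (hsub34.mul_left _)
    have hbound2 : ∀ d : Tset, C₀ * P * ((d:ℕ):ℝ) ^ (-(3/4):ℝ) ≤
        (C₀ * P * (ℓ:ℝ) ^ (-(1/4):ℝ)) * ((d:ℕ):ℝ) ^ (-(1/2):ℝ) := by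
      intro d
      have hd0' : (0:ℝ) < (d:ℕ) := by exact_mod_cast d.2.1
      have hld : (ℓ:ℝ) ≤ ((d:ℕ):ℝ) := by exact_mod_cast Nat.le_of_dvd d.2.1 d.2.2.2
      have key : ((d:ℕ):ℝ) ^ (-(3/4):ℝ) ≤ (ℓ:ℝ) ^ (-(1/4):ℝ) * ((d:ℕ):ℝ) ^ (-(1/2):ℝ) := by
        rw [show (-(3/4):ℝ) = -(1/4) + -(1/2) by norm_num, Real.rpow_add hd0']
        exact mul_le_mul_of_nonneg_right
          (Real.rpow_le_rpow_of_nonpos hℓ0' hld (by norm_num))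
          (Real.rpow_nonneg hd0'.le _)
      calc C₀ * P * ((d:ℕ):ℝ) ^ (-(3/4):ℝ)
          ≤ C₀ * P * ((ℓ:ℝ) ^ (-(1/4):ℝ) * ((d:ℕ):ℝ) ^ (-(1/2):ℝ)) :=
            mul_le_mul_of_nonneg_left key (by positivity)
        _ = (C₀ * P * (ℓ:ℝ) ^ (-(1/4):ℝ)) * ((d:ℕ):ℝ) ^ (-(1/2):ℝ) := by ring
    have htsum2 : ∑' d : Tset, ((d:ℕ):ℝ) ^ (-(1/2):ℝ) ≤ Q := by
      rw [tsum_subtype Tset (fun n : ℕ => (n:ℝ) ^ (-(1/2):ℝ))]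
      exact Summable.tsum_le_tsum
        (fun n => Set.indicator_le_indicator_of_subset hTS
          (fun m => Real.rpow_nonneg (Nat.cast_nonneg m) _) n)
        (summable_subtype_iff_indicator.mp hsub2) hsum2
    have hR : ‖∑' d : Tset, era F (d:ℕ) / ((d:ℕ):ℂ)‖ ≤
        C₀ * P * Q * (ℓ:ℝ) ^ (-(1/4):ℝ) := by
      calc ‖∑' d : Tset, era F (d:ℕ) / ((d:ℕ):ℂ)‖
          ≤ ∑' d : Tset, ‖era F (d:ℕ) / ((d:ℕ):ℂ)‖ := norm_tsum_le_tsum_norm hnsum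
        _ ≤ ∑' d : Tset, (C₀ * P * (ℓ:ℝ) ^ (-(1/4):ℝ)) * ((d:ℕ):ℝ) ^ (-(1/2):ℝ) :=
            Summable.tsum_le_tsum (fun d => le_trans (hbound d) (hbound2 d)) hnsum
              (hsub2.mul_left _)
        _ = (C₀ * P * (ℓ:ℝ) ^ (-(1/4):ℝ)) * ∑' d : Tset, ((d:ℕ):ℝ) ^ (-(1/2):ℝ) :=
            tsum_mul_left
        _ ≤ (C₀ * P * (ℓ:ℝ) ^ (-(1/4):ℝ)) * Q :=
            mul_le_mul_of_nonneg_left htsum2 (by positivity)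
        _ = C₀ * P * Q * (ℓ:ℝ) ^ (-(1/4):ℝ) := by ring
    have hω : (2:ℝ) ^ ℓ.primeFactors.card ≤ (2:ℝ) ^ (V+1) := by
      refine pow_le_pow_right₀ one_le_two ?_
      calc ℓ.primeFactors.card ≤ (Finset.range (V+1)).card :=
            Finset.card_le_card (fun p hp => Finset.mem_range.mpr
              (Nat.lt_succ_of_le (hℓ.2 p hp)))
        _ = V + 1 := Finset.card_range _
    calc (2:ℝ) ^ ℓ.primeFactors.card * ‖∑' d : Tset, era F (d:ℕ) / ((d:ℕ):ℂ)‖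
        ≤ (2:ℝ) ^ (V+1) * (C₀ * P * Q * (ℓ:ℝ) ^ (-(1/4):ℝ)) :=
          mul_le_mul hω hR (norm_nonneg _) (by positivity)
      _ = (2:ℝ) ^ (V+1) * (C₀ * P * Q) *
            Set.indicator S (fun n : ℕ => (n:ℝ) ^ (-(1/4):ℝ)) ℓ := by
          rw [Set.indicator_of_mem hℓS]; ring
  · -- degenerate case: the index type is empty
    have hempty : IsEmpty {d : ℕ // 0 < d ∧ QSmooth V d ∧ ℓ ∣ d} := by
      refine ⟨fun d => hℓ ?_⟩
      obtain ⟨hd0, hdq, hld⟩ := d.2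
      refine ⟨Nat.pos_of_dvd_of_pos hld hd0, fun p hp => ?_⟩
      exact hdq p (Nat.primeFactors_mono hld hd0.ne' hp)
    haveI := hempty
    rw [tsum_empty, norm_zero, mul_zero]
    have : 0 ≤ Set.indicator S (fun n : ℕ => (n:ℝ) ^ (-(1/4):ℝ)) ℓ := hind_nonneg (1/4) ℓ
    positivity
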